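/- Let μ and ν be probability measures on ℝ whose supports are contained in [a⁻, a⁺] and [b⁻, b⁺] respectively, with 0 < a⁻ ≤ a⁺ ≤ 1 and 0 < b⁻ ≤ b⁺ ≤ 1, and let p_n = ∫ e^{−α} αⁿ/n! dμ(α) and q_n = ∫ e^{−β} βⁿ/n! dν(β). Then the Bhattacharyya coefficient of the two mixed Poisson distributions satisfies ∑_{n=0}^{∞} √(p_n·q_n) ≥ e^{−(a⁺ + b⁺)/2} + e^{−(a⁻ + b⁻)/2}·(e^{√(a⁻·b⁻)} − 1). -/

import Mathlib

open MeasureTheory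

lemma key_mono {t x : ℝ} (ht : 0 < t) (htx : t ≤ x) (hx1 : x ≤ 1) (m : ℕ) :
    Real.exp (-t) * t ^ (m + 1) ≤ Real.exp (-x) * x ^ (m + 1) := by
  have hx0 : 0 < x := lt_of_lt_of_le ht htx
  set y := x - t with hy
  have hy0 : 0 ≤ y := by simp only [hy]; linarith
  -- exp y - 1 ≤ y * exp y
  have h1 : Real.exp y - 1 ≤ y * Real.exp y := by
    have h := Real.add_one_le_exp (-y)
    have he : Real.exp (-y) * Real.exp y = 1 := by
      rw [← Real.exp_add]; simp
    nlinarith [Real.exp_pos y]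
  -- t * exp y ≤ 1
  have h2 : t * Real.exp y ≤ 1 := by
    have hyt : y ≤ 1 - t := by simp only [hy]; linarith
    have hm : Real.exp y ≤ Real.exp (1 - t) := Real.exp_le_exp.mpr hyt
    have ht1 : t ≤ Real.exp (t - 1) := by
      have := Real.add_one_le_exp (t - 1); linarith
    have hkey : t * Real.exp (1 - t) ≤ 1 := by
      have he : Real.exp (t - 1) * Real.exp (1 - t) = 1 := by
        rw [← Real.exp_add]; ring_nf; exact Real.exp_zero
      nlinarith [Real.exp_pos (1 - t)]
    nlinarith [Real.exp_pos y, Real.exp_pos (1 - t)]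
  -- t * exp y ≤ x
  have h3 : t * Real.exp y ≤ x := by nlinarith [Real.exp_pos y]
  have h4 : t ^ (m + 1) * Real.exp y ≤ x ^ (m + 1) := by
    have hpow : t ^ m ≤ x ^ m := pow_le_pow_left₀ ht.le htx m
    calc t ^ (m + 1) * Real.exp y = t ^ m * (t * Real.exp y) := by ring
      _ ≤ x ^ m * x := mul_le_mul hpow h3 (by positivity) (by positivity)
      _ = x ^ (m + 1) := by ring
  have he : Real.exp (-t) = Real.exp (-x) * Real.exp y := by
    rw [← Real.exp_add]; congr 1; ring
  rw [he]
  calc Real.exp (-x) * Real.exp y * t ^ (m + 1)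
      = Real.exp (-x) * (t ^ (m + 1) * Real.exp y) := by ring
    _ ≤ Real.exp (-x) * x ^ (m + 1) :=
        mul_le_mul_of_nonneg_left h4 (Real.exp_pos _).le

set_option maxHeartbeats 1000000 in
theorem mixed_poisson_bhattacharyya_lower_bound
    (μ ν : Measure ℝ) [IsProbabilityMeasure μ] [IsProbabilityMeasure ν]
    (am ap bm bp : ℝ)
    (ham : 0 < am) (ha : am ≤ ap) (hap : ap ≤ 1)
    (hbm : 0 < bm) (hb : bm ≤ bp) (hbp : bp ≤ 1)
    (hsuppμ : ∀ᵐ α ∂μ, α ∈ Set.Icc am ap)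
    (hsuppν : ∀ᵐ β ∂ν, β ∈ Set.Icc bm bp)
    (p q : ℕ → ℝ)
    (hp : ∀ n, p n = ∫ α, Real.exp (-α) * α ^ n / (Nat.factorial n) ∂μ)
    (hq : ∀ n, q n = ∫ β, Real.exp (-β) * β ^ n / (Nat.factorial n) ∂ν) :
    Real.exp (-(ap + bp) / 2) +
      Real.exp (-(am + bm) / 2) * (Real.exp (Real.sqrt (am * bm)) - 1) ≤
    ∑' n, Real.sqrt (p n * q n) := by
  have hint : ∀ (ρ : Measure ℝ) [IsProbabilityMeasure ρ] (lo hi : ℝ), 0 < lo → hi ≤ 1 →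
      (∀ᵐ α ∂ρ, α ∈ Set.Icc lo hi) → ∀ n : ℕ,
      Integrable (fun α => Real.exp (-α) * α ^ n / (Nat.factorial n)) ρ := by
    intro ρ _ lo hi hlo hhi hsupp n
    apply Integrable.mono' (integrable_const (1:ℝ))
    · exact (((Real.continuous_exp.comp continuous_neg).mul (continuous_pow n)).div_const
        _).aestronglyMeasurable
    · filter_upwards [hsupp] with α hα
      obtain ⟨h1, h2⟩ := hα
      have hα0 : 0 ≤ α := le_of_lt (lt_of_lt_of_le hlo h1)
      have hα1 : α ≤ 1 := le_trans h2 hhi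
      have hfac : (1:ℝ) ≤ (Nat.factorial n : ℝ) := by
        exact_mod_cast Nat.one_le_iff_ne_zero.mpr (Nat.factorial_ne_zero n)
      rw [Real.norm_eq_abs, abs_of_nonneg (by positivity)]
      have he : Real.exp (-α) ≤ 1 := Real.exp_le_one_iff.mpr (by linarith)
      have hpw : α ^ n ≤ 1 := pow_le_one₀ hα0 hα1
      calc Real.exp (-α) * α ^ n / (Nat.factorial n : ℝ)
          ≤ Real.exp (-α) * α ^ n / 1 :=
            div_le_div_of_nonneg_left (by positivity) one_pos hfac
        _ ≤ 1 := by rw [div_one]; nlinarith [Real.exp_pos (-α)]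
  -- lower bound for n ≥ 1
  have hlow : ∀ (ρ : Measure ℝ) [IsProbabilityMeasure ρ] (lo hi : ℝ), 0 < lo → lo ≤ hi →
      hi ≤ 1 → (∀ᵐ α ∂ρ, α ∈ Set.Icc lo hi) → ∀ m : ℕ,
      Real.exp (-lo) * lo ^ (m+1) / (Nat.factorial (m+1)) ≤
        ∫ α, Real.exp (-α) * α ^ (m+1) / (Nat.factorial (m+1)) ∂ρ := by
    intro ρ _ lo hi hlo hlohi hhi hsupp m
    have hc := integral_const (μ := ρ) (Real.exp (-lo) * lo ^ (m+1) / (Nat.factorial (m+1)))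
    simp only [measure_univ, ENNReal.toReal_one, probReal_univ, one_smul] at hc
    rw [← hc]
    apply integral_mono_ae (integrable_const _) (hint ρ lo hi hlo hhi hsupp (m+1))
    filter_upwards [hsupp] with α hα
    exact div_le_div_of_nonneg_right (key_mono hlo hα.1 (le_trans hα.2 hhi) m)
      (by positivity)
  -- lower bound for n = 0
  have hlow0 : ∀ (ρ : Measure ℝ) [IsProbabilityMeasure ρ] (lo hi : ℝ), 0 < lo → lo ≤ hi →
      hi ≤ 1 → (∀ᵐ α ∂ρ, α ∈ Set.Icc lo hi) →
      Real.exp (-hi) ≤ ∫ α, Real.exp (-α) * α ^ 0 / (Nat.factorial 0) ∂ρ := by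
    intro ρ _ lo hi hlo hlohi hhi hsupp
    have hc := integral_const (μ := ρ) (Real.exp (-hi))
    simp only [measure_univ, ENNReal.toReal_one, probReal_univ, one_smul] at hc
    rw [← hc]
    apply integral_mono_ae (integrable_const _) (hint ρ lo hi hlo hhi hsupp 0)
    filter_upwards [hsupp] with α hα
    simp only [pow_zero, Nat.factorial_zero, Nat.cast_one, mul_one, div_one]
    exact Real.exp_le_exp.mpr (by linarith [hα.2])
  -- upper bound
  have hupp : ∀ (ρ : Measure ℝ) [IsProbabilityMeasure ρ] (lo hi : ℝ), 0 < lo → hi ≤ 1 →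
      (∀ᵐ α ∂ρ, α ∈ Set.Icc lo hi) → ∀ n : ℕ,
      (∫ α, Real.exp (-α) * α ^ n / (Nat.factorial n) ∂ρ) ≤ 1 / (Nat.factorial n) := by
    intro ρ _ lo hi hlo hhi hsupp n
    have hc := integral_const (μ := ρ) ((1:ℝ) / (Nat.factorial n))
    simp only [measure_univ, ENNReal.toReal_one, probReal_univ, one_smul] at hc
    rw [← hc]
    apply integral_mono_ae (hint ρ lo hi hlo hhi hsupp n) (integrable_const _)
    filter_upwards [hsupp] with α hα
    have hα0 : 0 ≤ α := le_of_lt (lt_of_lt_of_le hlo hα.1)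
    have hα1 : α ≤ 1 := le_trans hα.2 hhi
    have he : Real.exp (-α) ≤ 1 := Real.exp_le_one_iff.mpr (by linarith)
    have hpw : α ^ n ≤ 1 := pow_le_one₀ hα0 hα1
    apply div_le_div_of_nonneg_right _ (by positivity)
    nlinarith [Real.exp_pos (-α)]
  have hnonneg : ∀ (n : ℕ),
      0 ≤ ∫ β, Real.exp (-β) * β ^ n / (Nat.factorial n) ∂ν := by
    intro n
    apply integral_nonneg_of_ae
    filter_upwards [hsuppν] with β hβ
    have hβ0 : 0 ≤ β := le_of_lt (lt_of_lt_of_le hbm hβ.1)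
    positivity
  set d := Real.sqrt (am * bm) with hd
  set c := Real.exp (-(am + bm) / 2) with hc
  have hd2 : d ^ 2 = am * bm := Real.sq_sqrt (by positivity)
  have hc2 : c ^ 2 = Real.exp (-am) * Real.exp (-bm) := by
    rw [hc, sq, ← Real.exp_add, ← Real.exp_add]; congr 1; ring
  -- summability of sqrt(p n * q n)
  have hbound : ∀ n, Real.sqrt (p n * q n) ≤ 1 / (Nat.factorial n) := by
    intro n
    have h1 : p n * q n ≤ (1 / (Nat.factorial n)) * (1 / (Nat.factorial n)) := by
      rw [hp, hq]
      exact mul_le_mul (hupp μ am ap ham hap hsuppμ n) (hupp ν bm bp hbm hbp hsuppν n)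
        (hnonneg n) (by positivity)
    calc Real.sqrt (p n * q n)
        ≤ Real.sqrt ((1 / (Nat.factorial n)) * (1 / (Nat.factorial n))) :=
          Real.sqrt_le_sqrt h1
      _ = 1 / (Nat.factorial n) := Real.sqrt_mul_self (by positivity)
  have hsummable : Summable (fun n => Real.sqrt (p n * q n)) := by
    apply Summable.of_nonneg_of_le (fun n => Real.sqrt_nonneg _) hbound
    simpa using Real.summable_pow_div_factorial 1
  -- lower bounding sequence
  set g : ℕ → ℝ := fun n =>
    if n = 0 then Real.exp (-(ap + bp) / 2) else c * d ^ n / (Nat.factorial n) with hgdef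
  have hfsum : Summable (fun n : ℕ => c * d ^ n / (Nat.factorial n)) := by
    have := (Real.summable_pow_div_factorial d).mul_left c
    simpa [mul_div_assoc] using this
  have hgsum : Summable g := by
    rw [← summable_nat_add_iff 1]
    have : (fun n : ℕ => g (n + 1)) = fun n : ℕ => c * d ^ (n+1) / (Nat.factorial (n+1)) := by
      funext n; simp [hgdef]
    rw [this]
    exact (summable_nat_add_iff 1).mpr hfsum
  -- pointwise bound g n ≤ sqrt (p n * q n)
  have hle : ∀ n, g n ≤ Real.sqrt (p n * q n) := by
    intro n
    apply Real.le_sqrt_of_sq_le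
    match n with
    | 0 =>
      have h1 : Real.exp (-ap) ≤ p 0 := by rw [hp]; exact hlow0 μ am ap ham ha hap hsuppμ
      have h2 : Real.exp (-bp) ≤ q 0 := by rw [hq]; exact hlow0 ν bm bp hbm hb hbp hsuppν
      have : g 0 ^ 2 = Real.exp (-ap) * Real.exp (-bp) := by
        simp only [hgdef, if_pos rfl]
        rw [sq, ← Real.exp_add, ← Real.exp_add]; congr 1; ring
      rw [this]
      exact mul_le_mul h1 h2 (Real.exp_pos _).le (le_trans (Real.exp_pos _).le h1)
    | (m+1) =>
      have h1 : Real.exp (-am) * am ^ (m+1) / (Nat.factorial (m+1)) ≤ p (m+1) := by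
        rw [hp]; exact hlow μ am ap ham ha hap hsuppμ m
      have h2 : Real.exp (-bm) * bm ^ (m+1) / (Nat.factorial (m+1)) ≤ q (m+1) := by
        rw [hq]; exact hlow ν bm bp hbm hb hbp hsuppν m
      have heq : g (m+1) ^ 2 =
          (Real.exp (-am) * am ^ (m+1) / (Nat.factorial (m+1))) *
          (Real.exp (-bm) * bm ^ (m+1) / (Nat.factorial (m+1))) := by
        simp only [hgdef, if_neg (Nat.succ_ne_zero m)]
        have : (c * d ^ (m+1) / (Nat.factorial (m+1))) ^ 2
            = c ^ 2 * (d ^ 2) ^ (m+1) / ((Nat.factorial (m+1) : ℝ)) ^ 2 := by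
          ring
        rw [this, hc2, hd2, mul_pow]
        ring
      rw [heq]
      exact mul_le_mul h1 h2 (by positivity)
        (le_trans (by positivity) h1)
  have htsum_le : ∑' n, g n ≤ ∑' n, Real.sqrt (p n * q n) :=
    Summable.tsum_le_tsum hle hgsum hsummable
  refine le_trans (le_of_eq ?_) htsum_le
  -- compute ∑' g
  have hzero : ∑' n, g n = g 0 + ∑' n, g (n + 1) := Summable.tsum_eq_zero_add hgsum
  have hfzero : ∑' n : ℕ, c * d ^ n / (Nat.factorial n)
      = c * d ^ 0 / (Nat.factorial 0) + ∑' n : ℕ, c * d ^ (n+1) / (Nat.factorial (n+1)) :=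
    Summable.tsum_eq_zero_add hfsum
  have hexp : ∑' n : ℕ, c * d ^ n / (Nat.factorial n) = c * Real.exp d := by
    rw [Real.exp_eq_exp_ℝ, NormedSpace.exp_eq_tsum_div]
    rw [← tsum_mul_left]
    congr 1; funext n; ring
  have htail : ∑' n : ℕ, g (n + 1) = c * Real.exp d - c := by
    have : (fun n : ℕ => g (n + 1)) = fun n : ℕ => c * d ^ (n+1) / (Nat.factorial (n+1)) := by
      funext n; simp [hgdef]
    rw [this]
    have := hfzero
    rw [hexp] at this
    simp only [pow_zero, Nat.factorial_zero, Nat.cast_one, mul_one, div_one] at this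
    linarith
  rw [hzero, htail]
  simp only [hgdef, if_pos rfl]
  ring
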